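/- arXiv:1802.07440 — 5 statements merged into one kernel-verified Lean document; each statement's English description precedes it below -/
import Mathlib

section
/- Let G = (V,E) be a graph where every vertex has a strict preference order over its neighbors, and let M and N be matchings in G. Then Δ(N,M) = Σ_{e ∈ Ñ} cost_M(e), where Ñ is the perfect matching of G̃ obtained from N by adding a self-loop at every vertex left unmatched in N. -/
open scoped Classical

/-- A roommates instance: a (finite) graph `(V, adj)` together with a raw preference
relation: `pref u v w` means vertex `u` strictly prefers its neighbor `v` to its
neighbor `w`. -/
structure RoommatesInstance (V : Type) where
  adj : V → V → Prop
  adj_symm : ∀ u v, adj u v → adj v u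
  adj_irrefl : ∀ u, ¬ adj u u
  pref : V → V → V → Prop

namespace RoommatesInstance

variable {V : Type}

/-- The preference relation of each vertex is a strict linear order on its neighbors. -/
def StrictPrefs (G : RoommatesInstance V) : Prop :=
  (∀ u v w, G.pref u v w → G.adj u v ∧ G.adj u w) ∧
  (∀ u v w x, G.pref u v w → G.pref u w x → G.pref u v x) ∧
  (∀ u v w, G.pref u v w → ¬ G.pref u w v) ∧
  (∀ u v w, G.adj u v → G.adj u w → v ≠ w → G.pref u v w ∨ G.pref u w v)

/-- A matching, encoded by the partner function of the corresponding perfect matching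
`M̃` of `G̃` (the graph `G` with a self-loop added at every vertex): `m u = u` means
that `u` is unmatched in `M`, i.e. matched to itself along its self-loop in `M̃`. -/
structure Matching (G : RoommatesInstance V) where
  m : V → V
  invol : ∀ u, m (m u) = u
  adj_of_ne : ∀ u, m u ≠ u → G.adj u (m u)

variable (G : RoommatesInstance V)

/-- `u` considers `v` strictly better than `w`, where each of `v`, `w` is either a
neighbor of `u` or `u` itself (`u` itself stands for being unmatched, which every
vertex ranks below all of its neighbors). -/
def Better (u v w : V) : Prop :=
  (w = u ∧ v ≠ u) ∨ (v ≠ u ∧ w ≠ u ∧ G.pref u v w)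

/-- vertex `u` prefers matching `M` to matching `M'` -/
def Prefers (M M' : G.Matching) (u : V) : Prop :=
  G.Better u (M.m u) (M'.m u)

/-- `φ(M,M')`: the number of vertices preferring `M` to `M'` -/
noncomputable def phi [Fintype V] (M M' : G.Matching) : ℕ :=
  (Finset.univ.filter fun u => G.Prefers M M' u).card

/-- `Δ(M,M') = φ(M,M') - φ(M',M)` -/
noncomputable def delta [Fintype V] (M M' : G.Matching) : ℤ :=
  (G.phi M M' : ℤ) - (G.phi M' M : ℤ)

/-- a matching `M` is popular if it never loses a head-to-head election -/
def Popular [Fintype V] (M : G.Matching) : Prop :=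
  ∀ M' : G.Matching, 0 ≤ G.delta M M'

/-- `(u,v)` is a blocking edge to `M`: both endpoints prefer each other to their
assignments in `M̃`. -/
def Blocks (M : G.Matching) (u v : V) : Prop :=
  G.adj u v ∧ G.Better u v (M.m u) ∧ G.Better v u (M.m v)

/-- `(u,v)` is a negative edge to `M`: both endpoints prefer their assignments in `M̃`
to each other. -/
def Negative (M : G.Matching) (u v : V) : Prop :=
  G.adj u v ∧ G.Better u (M.m u) v ∧ G.Better v (M.m v) u

/-- `cost_M` on the edges of `G̃`: `cost_M(u,v) = 2` for a blocking edge, `-2` for a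
negative edge, `0` otherwise; `cost_M(u,u) = 0` if `u` is unmatched in `M` and `-1`
otherwise. -/
noncomputable def cost (M : G.Matching) (u v : V) : ℤ :=
  if u = v then (if M.m u = u then 0 else -1)
  else if G.Blocks M u v then 2
  else if G.Negative M u v then -2
  else 0

/-- a stable matching: no blocking edge -/
def Stable (M : G.Matching) : Prop := ∀ u v, ¬ G.Blocks M u v

/-- the number of edges of a matching -/
noncomputable def msize [Fintype V] (M : G.Matching) : ℕ :=
  (Finset.univ.filter fun u => M.m u ≠ u).card / 2

theorem cost_comm (M : G.Matching) (u v : V) : G.cost M u v = G.cost M v u := by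
  unfold cost
  rcases eq_or_ne u v with rfl | huv
  · rfl
  · rw [if_neg huv, if_neg (Ne.symm huv)]
    have hb : G.Blocks M u v ↔ G.Blocks M v u :=
      ⟨fun ⟨h1, h2, h3⟩ => ⟨G.adj_symm _ _ h1, h3, h2⟩,
       fun ⟨h1, h2, h3⟩ => ⟨G.adj_symm _ _ h1, h3, h2⟩⟩
    have hn : G.Negative M u v ↔ G.Negative M v u :=
      ⟨fun ⟨h1, h2, h3⟩ => ⟨G.adj_symm _ _ h1, h3, h2⟩,
       fun ⟨h1, h2, h3⟩ => ⟨G.adj_symm _ _ h1, h3, h2⟩⟩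
    simp only [hb, hn]

noncomputable def vote (M N : G.Matching) (u : V) : ℤ :=
  (if G.Prefers N M u then 1 else 0) - (if G.Prefers M N u then 1 else 0)

lemma better_asymm (hG : G.StrictPrefs) {u v w : V}
    (h : G.Better u v w) : ¬ G.Better u w v := by
  rcases h with ⟨hw, hv⟩ | ⟨hv, hw, hp⟩
  · rintro (⟨hv2, _⟩ | ⟨hw2, _, _⟩)
    · exact hv hv2
    · exact hw2 hw
  · rintro (⟨hv2, _⟩ | ⟨_, _, hp'⟩)
    · exact hv hv2
    · exact hG.2.2.1 _ _ _ hp hp'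

lemma not_better_self (hG : G.StrictPrefs) (u v : V) : ¬ G.Better u v v := by
  rintro (⟨rfl, h⟩ | ⟨_, _, hp⟩)
  · exact h rfl
  · exact hG.2.2.1 _ _ _ hp hp

lemma better_dichotomy (hG : G.StrictPrefs) (M : G.Matching) {u v : V}
    (huv : v ≠ u) (hadj : G.adj u v) (hM : M.m u ≠ v) :
    (G.Better u v (M.m u) ∧ ¬ G.Better u (M.m u) v) ∨
    (¬ G.Better u v (M.m u) ∧ G.Better u (M.m u) v) := by
  have hor : G.Better u v (M.m u) ∨ G.Better u (M.m u) v := by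
    by_cases h : M.m u = u
    · exact Or.inl (Or.inl ⟨h, huv⟩)
    · have hadj' := M.adj_of_ne u h
      rcases hG.2.2.2 u v (M.m u) hadj hadj' (fun he => hM he.symm) with hp | hp
      · exact Or.inl (Or.inr ⟨huv, h, hp⟩)
      · exact Or.inr (Or.inr ⟨h, huv, hp⟩)
  rcases hor with h | h
  · exact Or.inl ⟨h, G.better_asymm hG h⟩
  · exact Or.inr ⟨G.better_asymm hG h, h⟩

lemma cost_self_eq_vote (hG : G.StrictPrefs) (M N : G.Matching) {u : V}
    (hNu : N.m u = u) : G.cost M u u = G.vote M N u := by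
  unfold cost vote Prefers
  rw [hNu, if_pos rfl]
  have h1 : ¬ G.Better u u (M.m u) := by
    rintro (⟨_, h⟩ | ⟨h, _, _⟩) <;> exact h rfl
  have h2 : G.Better u (M.m u) u ↔ M.m u ≠ u := by
    constructor
    · rintro (⟨_, h⟩ | ⟨h, _, _⟩) <;> exact h
    · intro h; exact Or.inl ⟨rfl, h⟩
  by_cases h : M.m u = u <;> simp [h, h1, h2]

lemma cost_eq_vote_add (hG : G.StrictPrefs) (M N : G.Matching) {u v : V}
    (huv : u ≠ v) (hadj : G.adj u v) (hNu : N.m u = v) (hNv : N.m v = u) :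
    G.cost M u v = G.vote M N u + G.vote M N v := by
  unfold cost vote Prefers
  rw [hNu, hNv, if_neg huv]
  by_cases hMu : M.m u = v
  · have hMv : M.m v = u := by rw [← hMu, M.invol]
    have h1 : ¬ G.Better u v (M.m u) := by rw [hMu]; exact G.not_better_self hG u v
    have h2 : ¬ G.Better u (M.m u) v := by rw [hMu]; exact G.not_better_self hG u v
    have h3 : ¬ G.Better v u (M.m v) := by rw [hMv]; exact G.not_better_self hG v u
    have h4 : ¬ G.Better v (M.m v) u := by rw [hMv]; exact G.not_better_self hG v u
    have hb : ¬ G.Blocks M u v := fun ⟨_, ha, _⟩ => h1 ha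
    have hn : ¬ G.Negative M u v := fun ⟨_, ha, _⟩ => h2 ha
    simp [hb, hn, h1, h2, h3, h4]
  · have hMv : M.m v ≠ u := fun h => hMu (by rw [← h, M.invol])
    rcases G.better_dichotomy hG M huv.symm hadj hMu with ⟨hA, hB⟩ | ⟨hA, hB⟩ <;>
      rcases G.better_dichotomy hG M huv (G.adj_symm _ _ hadj) hMv with ⟨hC, hD⟩ | ⟨hC, hD⟩
    · have hb : G.Blocks M u v := ⟨hadj, hA, hC⟩
      simp [hb, hA, hB, hC, hD]
    · have hb : ¬ G.Blocks M u v := fun ⟨_, _, h⟩ => hC h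
      have hn : ¬ G.Negative M u v := fun ⟨_, h, _⟩ => hB h
      simp [hb, hn, hA, hB, hC, hD]
    · have hb : ¬ G.Blocks M u v := fun ⟨_, h, _⟩ => hA h
      have hn : ¬ G.Negative M u v := fun ⟨_, _, h⟩ => hD h
      simp [hb, hn, hA, hB, hC, hD]
    · have hb : ¬ G.Blocks M u v := fun ⟨_, h, _⟩ => hA h
      have hn : G.Negative M u v := ⟨hadj, hB, hD⟩
      simp [hb, hn, hA, hB, hC, hD]

end RoommatesInstance

open RoommatesInstance in
/-- For matchings `M`, `N` in a roommates instance `G` with strict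
preference lists, `Δ(N,M) = Σ_{e ∈ Ñ} cost_M(e)`, where `Ñ` is the perfect matching
of `G̃` obtained from `N` by adding a self-loop at every vertex unmatched in `N`. -/
theorem delta_eq_sum_cost {V : Type} [Fintype V] (G : RoommatesInstance V)
    (hG : G.StrictPrefs) (M N : G.Matching) :
    G.delta N M =
      ∑ e ∈ Finset.univ.image (fun u => s(u, N.m u)),
        Sym2.lift ⟨fun u v => G.cost M u v, fun u v => G.cost_comm M u v⟩ e := by
  classical
  have hdelta : G.delta N M = ∑ u, G.vote M N u := by
    unfold RoommatesInstance.delta RoommatesInstance.phi RoommatesInstance.vote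
    rw [Finset.card_filter, Finset.card_filter]
    push_cast
    rw [Finset.sum_sub_distrib]
  rw [hdelta]
  refine (Finset.sum_image' _ fun c _ => ?_).symm
  by_cases hc : N.m c = c
  · have hfib : (Finset.univ.filter fun c' => s(c', N.m c') = s(c, N.m c)) = {c} := by
      ext c'
      simp only [Finset.mem_filter, Finset.mem_univ, true_and, Finset.mem_singleton, hc,
        Sym2.eq_iff]
      constructor
      · rintro (⟨h, _⟩ | ⟨h, _⟩) <;> exact h
      · rintro rfl
        exact Or.inl ⟨rfl, hc⟩
    rw [hfib, Finset.sum_singleton, hc, Sym2.lift_mk]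
    exact G.cost_self_eq_vote hG M N hc
  · have hfib : (Finset.univ.filter fun c' => s(c', N.m c') = s(c, N.m c))
        = {c, N.m c} := by
      ext c'
      simp only [Finset.mem_filter, Finset.mem_univ, true_and, Finset.mem_insert,
        Finset.mem_singleton, Sym2.eq_iff]
      constructor
      · rintro (⟨h, _⟩ | ⟨h, _⟩)
        · exact Or.inl h
        · exact Or.inr h
      · rintro (rfl | rfl)
        · exact Or.inl ⟨rfl, rfl⟩
        · exact Or.inr ⟨rfl, N.invol c⟩
    rw [hfib, Finset.sum_pair (Ne.symm hc), Sym2.lift_mk]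
    exact G.cost_eq_vote_add hG M N (Ne.symm hc) (N.adj_of_ne c hc) rfl (N.invol c)
end

section
/- Let G = (V,E) be a graph with strict preference lists and M a matching in G. Then M is strongly dominant if and only if there exists α : V → ℝ such that α_u ∈ {−1,+1} for every vertex u matched in M, α_u = 0 for every vertex u unmatched in M, Σ_{u∈V} α_u = 0, α_u + α_v ≥ cost_M(u,v) for every edge (u,v) ∈ E, and α_u ≥ cost_M(u,u) for every u ∈ V. -/
open scoped Classical

namespace RoommatesInstance

variable {V : Type} (G : RoommatesInstance V)

/-- `M` is strongly dominant: there is a partition `(L,R)` of `V` such that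
`M ⊆ L × R`, `M` matches all of `R`, every blocking edge to `M` lies in `R × R`,
and every edge of `G` inside `L × L` is negative to `M`. -/
def StronglyDominant (M : G.Matching) : Prop :=
  ∃ L R : Set V,
    (∀ v, (v ∈ L ∨ v ∈ R) ∧ ¬ (v ∈ L ∧ v ∈ R)) ∧
    (∀ u, M.m u ≠ u → (u ∈ L ↔ M.m u ∈ R)) ∧
    (∀ u ∈ R, M.m u ≠ u) ∧
    (∀ u v, G.Blocks M u v → u ∈ R ∧ v ∈ R) ∧
    (∀ u v, G.adj u v → u ∈ L → v ∈ L → G.Negative M u v)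

end RoommatesInstance

open RoommatesInstance in
/-- `M` is strongly dominant iff there is `α : V → ℝ` with
`α_u ∈ {±1}` for matched `u`, `α_u = 0` for unmatched `u`, `Σ α_u = 0`,
`α_u + α_v ≥ cost_M(u,v)` on every edge, and `α_u ≥ cost_M(u,u)` for every vertex. -/
theorem stronglyDominant_iff_witness {V : Type} [Fintype V] (G : RoommatesInstance V)
    (hG : G.StrictPrefs) (M : G.Matching) :
    G.StronglyDominant M ↔
      ∃ α : V → ℝ,
        (∀ u, M.m u ≠ u → α u = 1 ∨ α u = -1) ∧
        (∀ u, M.m u = u → α u = 0) ∧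
        (∑ u, α u) = 0 ∧
        (∀ u v, G.adj u v → (G.cost M u v : ℝ) ≤ α u + α v) ∧
        (∀ u, (G.cost M u u : ℝ) ≤ α u) := by
  have sumcomp : ∀ α : V → ℝ, ∑ u, α (M.m u) = ∑ u, α u := fun α =>
    Fintype.sum_bijective M.m (Function.Involutive.bijective M.invol)
      (fun u => α (M.m u)) α (fun _ => rfl)
  have hnotb : ∀ u x, ¬ G.Better u x x := by
    intro u x h
    rcases h with ⟨h1, h2⟩ | ⟨h1, h2, h3⟩
    · exact h2 h1
    · exact hG.2.2.1 _ _ _ h3 h3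
  have hcost0 : ∀ u, M.m u ≠ u → G.cost M u (M.m u) = 0 := by
    intro u hu
    unfold RoommatesInstance.cost
    rw [if_neg (fun h => hu h.symm)]
    rw [if_neg (fun h : G.Blocks M u (M.m u) => hnotb u (M.m u) h.2.1)]
    rw [if_neg (fun h : G.Negative M u (M.m u) => hnotb u (M.m u) h.2.1)]
  constructor
  · rintro ⟨L, R, hpart, hLR, hRm, hblocks, hneg⟩
    classical
    refine ⟨fun u => if M.m u = u then 0 else if u ∈ R then 1 else -1, ?_, ?_, ?_, ?_, ?_⟩
    · intro u hu
      dsimp only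
      rw [if_neg hu]
      by_cases h : u ∈ R
      · exact Or.inl (if_pos h)
      · exact Or.inr (if_neg h)
    · intro u hu; exact if_pos hu
    · -- sum = 0
      set α : V → ℝ := fun u => if M.m u = u then 0 else if u ∈ R then 1 else -1 with hα
      have hpair : ∀ u, α u + α (M.m u) = 0 := by
        intro u
        by_cases hu : M.m u = u
        · simp [hα, hu]
        · have hmu : M.m (M.m u) ≠ M.m u := by rw [M.invol]; exact fun h => hu h.symm
          by_cases hR : u ∈ R
          · have hmR : M.m u ∉ R := by
              intro hmR
              have := (hLR (M.m u) hmu).mpr (by rw [M.invol]; exact hR)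
              exact (hpart (M.m u)).2 ⟨this, hmR⟩
            simp [hα, hu, hR, hmu, hmR]
          · have hL : u ∈ L := ((hpart u).1).resolve_right hR
            have hmR : M.m u ∈ R := (hLR u hu).mp hL
            simp [hα, hu, hR, hmu, hmR]
      have h2 : ∑ u, (α u + α (M.m u)) = 0 :=
        Finset.sum_eq_zero (fun u _ => hpair u)
      rw [Finset.sum_add_distrib, sumcomp α] at h2
      linarith
    · -- edge constraints
      intro u v huv
      set α : V → ℝ := fun u => if M.m u = u then 0 else if u ∈ R then 1 else -1 with hα
      have hne : u ≠ v := fun h => G.adj_irrefl u (h ▸ huv)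
      have hbd : ∀ w, -1 ≤ α w ∧ α w ≤ 1 := by
        intro w
        by_cases h1 : M.m w = w
        · simp [hα, h1]
        · by_cases h2 : w ∈ R <;> simp [hα, h1, h2]
      unfold RoommatesInstance.cost
      rw [if_neg hne]
      by_cases hb : G.Blocks M u v
      · rw [if_pos hb]
        obtain ⟨hu, hv⟩ := hblocks u v hb
        have h1 : α u = 1 := by simp [hα, hRm u hu, hu]
        have h2 : α v = 1 := by simp [hα, hRm v hv, hv]
        rw [h1, h2]; norm_num
      · rw [if_neg hb]
        by_cases hn : G.Negative M u v
        · rw [if_pos hn]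
          have := (hbd u).1; have := (hbd v).1
          push_cast; linarith
        · rw [if_neg hn]
          push_cast
          have hor : u ∈ R ∨ v ∈ R := by
            by_contra h
            push_neg at h
            exact hn (hneg u v huv (((hpart u).1).resolve_right h.1)
              (((hpart v).1).resolve_right h.2))
          rcases hor with h | h
          · have h1 : α u = 1 := by simp [hα, hRm u h, h]
            have := (hbd v).1; linarith
          · have h1 : α v = 1 := by simp [hα, hRm v h, h]
            have := (hbd u).1; linarith
    · -- vertex constraints
      intro u
      unfold RoommatesInstance.cost
      rw [if_pos rfl]
      by_cases h1 : M.m u = u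
      · simp [h1]
      · rw [if_neg h1]
        by_cases h2 : u ∈ R <;> simp [h1, h2] <;> norm_num
  · rintro ⟨α, h1, h2, hsum, hedge, hvtx⟩
    -- key: α u + α (M.m u) = 0 for every u
    have hnn : ∀ u, 0 ≤ α u + α (M.m u) := by
      intro u
      by_cases hu : M.m u = u
      · rw [hu, h2 u hu]; norm_num
      · have hadj := M.adj_of_ne u hu
        have := hedge u (M.m u) hadj
        rw [hcost0 u hu] at this
        exact_mod_cast this
    have hzsum : ∑ u, (α u + α (M.m u)) = 0 := by
      rw [Finset.sum_add_distrib, sumcomp α, hsum]; norm_num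
    have hz : ∀ u, α u + α (M.m u) = 0 := by
      intro u
      have := (Finset.sum_eq_zero_iff_of_nonneg (fun u _ => hnn u)).mp hzsum u
        (Finset.mem_univ u)
      exact this
    have hle1 : ∀ u, α u ≤ 1 := by
      intro u
      by_cases hu : M.m u = u
      · rw [h2 u hu]; norm_num
      · rcases h1 u hu with h | h <;> rw [h] <;> norm_num
    have hunm : ∀ u, α u = 0 → M.m u = u := by
      intro u h
      by_contra hu
      rcases h1 u hu with h' | h' <;> rw [h'] at h <;> norm_num at h
    refine ⟨{u | α u ≠ 1}, {u | α u = 1}, ?_, ?_, ?_, ?_, ?_⟩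
    · intro v
      constructor
      · by_cases h : α v = 1
        · exact Or.inr h
        · exact Or.inl h
      · rintro ⟨ha, hb⟩; exact ha hb
    · intro u hu
      constructor
      · intro hL
        rcases h1 u hu with h | h
        · exact absurd h hL
        · have := hz u; simp only [Set.mem_setOf_eq]; linarith
      · intro hR
        simp only [Set.mem_setOf_eq] at hR ⊢
        have := hz u; intro h; rw [h] at this; linarith
    · intro u hu
      intro h
      simp only [Set.mem_setOf_eq] at hu
      rw [h2 u h] at hu
      norm_num at hu
    · intro u v hb
      have hadj := hb.1
      have hne : u ≠ v := fun h => G.adj_irrefl u (h ▸ hadj)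
      have hc : G.cost M u v = 2 := by
        unfold RoommatesInstance.cost
        rw [if_neg hne, if_pos hb]
      have := hedge u v hadj
      rw [hc] at this
      have h1 := hle1 u; have h2 := hle1 v
      constructor
      · show α u = 1; push_cast at this; linarith
      · show α v = 1; push_cast at this; linarith
    · intro u v hadj hu hv
      simp only [Set.mem_setOf_eq] at hu hv
      have hne : u ≠ v := fun h => G.adj_irrefl u (h ▸ hadj)
      have hule : α u ≤ 0 := by
        by_cases h : M.m u = u
        · rw [h2 u h]
        · rcases h1 u h with h' | h'
          · exact absurd h' hu
          · rw [h']; norm_num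
      have hvle : α v ≤ 0 := by
        by_cases h : M.m v = v
        · rw [h2 v h]
        · rcases h1 v h with h' | h'
          · exact absurd h' hv
          · rw [h']; norm_num
      by_contra hn
      have he := hedge u v hadj
      by_cases hb : G.Blocks M u v
      · have hc : G.cost M u v = 2 := by
          unfold RoommatesInstance.cost
          rw [if_neg hne, if_pos hb]
        rw [hc] at he; push_cast at he; linarith
      · have hc : G.cost M u v = 0 := by
          unfold RoommatesInstance.cost
          rw [if_neg hne, if_neg hb, if_neg hn]
        rw [hc] at he; push_cast at he
        have hu0 : α u = 0 := by linarith
        have hv0 : α v = 0 := by linarith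
        have hmu := hunm u hu0
        have hmv := hunm v hv0
        apply hb
        refine ⟨hadj, ?_, ?_⟩
        · rw [hmu]; exact Or.inl ⟨rfl, fun h => hne h.symm⟩
        · rw [hmv]; exact Or.inl ⟨rfl, hne⟩
end

section
/- Let G = (V,E) be a graph with strict preference lists and let G' be the associated bidirected instance. If M' is a stable matching in G', then the projection M of M' is a strongly dominant matching in G. -/
open scoped Classical

namespace RoommatesInstance

variable {V : Type} (G : RoommatesInstance V)

/-- A matching `M'` in the bidirected instance `G'` associated with `G`.  `G'` has the
same vertex set as `G` and, for each edge `(u,v)` of `G`, the two parallel edges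
`(u⁺,v⁻)` and `(u⁻,v⁺)`.  We record, for each vertex `u`, its partner together with
the sign of the copy of the partner that `u` is matched to: `p u = some (v, s)` means
that `u` is matched to `v^s` (`s = true` is `+`, `s = false` is `-`), i.e. the edge
`(u^{¬s}, v^s)` of `G'` is in `M'`. -/
structure BidirMatching where
  p : V → Option (V × Bool)
  mem_adj : ∀ u v s, p u = some (v, s) → G.adj u v
  consistent : ∀ u v s, p u = some (v, s) → p v = some (u, !s)

/-- The edge `(u⁺,v⁻)` belongs to `M'` iff `u` is matched to `v⁻`. -/
def BidirMatching.hasEdge {G : RoommatesInstance V} (M' : G.BidirMatching) (u v : V) : Prop :=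
  M'.p u = some (v, false)

/-- In `G'`, if `u`'s preference list in `G` is `v_1 ≻ ⋯ ≻ v_k`, then `u`'s list in
`G'` is `v_1⁻ ≻ ⋯ ≻ v_k⁻ ≻ v_1⁺ ≻ ⋯ ≻ v_k⁺`.  `M'` is stable in `G'` if for every
edge `(u⁺,v⁻) ∉ M'`, either `u` is matched to a neighbor it ranks better than `v⁻`,
or `v` is matched to a neighbor it ranks better than `u⁺`. -/
def BidirStable (M' : G.BidirMatching) : Prop :=
  ∀ u v, G.adj u v → ¬ M'.hasEdge u v →
    (∃ w, M'.p u = some (w, false) ∧ G.pref u w v) ∨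
    (∃ w t, M'.p v = some (w, t) ∧ (t = false ∨ (t = true ∧ G.pref v w u)))

/-- `M` is the projection of `M'`: `M = {(u,v) : (u⁺,v⁻) ∈ M' or (u⁻,v⁺) ∈ M'}`. -/
def IsProjection (M' : G.BidirMatching) (M : G.Matching) : Prop :=
  ∀ u, M.m u = ((M'.p u).map Prod.fst).getD u

end RoommatesInstance

open RoommatesInstance in
/-- If `M'` is a stable matching in the bidirected instance `G'`,
then the projection `M` of `M'` is a strongly dominant matching in `G`. -/
theorem projection_of_bidirStable_stronglyDominant {V : Type} [Fintype V]
    (G : RoommatesInstance V) (hG : G.StrictPrefs)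
    (M' : G.BidirMatching) (hM' : G.BidirStable M')
    (M : G.Matching) (hproj : G.IsProjection M' M) :
    G.StronglyDominant M := by
    classical
  have hm : ∀ u v s, M'.p u = some (v, s) → M.m u = v := by
    intro u v s h; rw [hproj u, h]; rfl
  have hnone : ∀ u, M'.p u = none → M.m u = u := by
    intro u h; rw [hproj u, h]; rfl
  have hBa : ∀ u v w, G.Better u v w → G.pref u w v → False := by
    rintro u v w (⟨rfl, hv⟩ | ⟨hv, hw, hp⟩) hp'
    · exact G.adj_irrefl w (hG.1 w w v hp').1
    · exact hG.2.2.1 _ _ _ hp hp'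
  have hself : ∀ u v, ¬ G.Better u v v := by
    rintro u v (⟨h1, h2⟩ | ⟨h1, h2, h3⟩)
    · exact h2 h1
    · exact hG.2.2.1 _ _ _ h3 h3
  have hne : ∀ u v, G.adj u v → u ≠ v := by
    rintro u v h rfl; exact G.adj_irrefl u h
  refine ⟨{u | ∃ v, M'.p u = some (v, false)}ᶜ, {u | ∃ v, M'.p u = some (v, false)},
    ?_, ?_, ?_, ?_, ?_⟩
  · intro v
    exact ⟨(em _).symm, fun ⟨h1, h2⟩ => h1 h2⟩
  · intro u hu
    cases h : M'.p u with
    | none => exact absurd (hnone u h) hu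
    | some vs =>
      obtain ⟨v, s⟩ := vs
      have hmv : M.m u = v := hm u v s h
      have hpv := M'.consistent u v s h
      rw [hmv]
      cases s with
      | false =>
        constructor
        · intro hL; exact absurd ⟨v, h⟩ hL
        · rintro ⟨w, hw⟩
          rw [hpv] at hw
          exact absurd (Option.some.inj hw) (by simp)
      | true =>
        constructor
        · intro _; exact ⟨u, hpv⟩
        · rintro _ ⟨w, hw⟩
          rw [h] at hw
          exact absurd (Option.some.inj hw) (by simp)
  · rintro u ⟨v, hv⟩
    rw [hm u v false hv]
    exact fun h => G.adj_irrefl u (h ▸ M'.mem_adj u v false hv)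
  · rintro u v ⟨hadj, hbu, hbv⟩
    have hvu : G.adj v u := G.adj_symm u v hadj
    have hnE1 : ¬ M'.hasEdge u v := by
      intro h
      rw [hm u v false h] at hbu
      exact hself u v hbu
    have hnE2 : ¬ M'.hasEdge v u := by
      intro h
      rw [hm v u false h] at hbv
      exact hself v u hbv
    constructor
    · rcases hM' v u hvu hnE2 with ⟨w, hw, hp⟩ | ⟨w, t, hw, ht⟩
      · rw [hm v w false hw] at hbv
        exact absurd hp (fun hp => hBa v u w hbv hp)
      · cases t with
        | false => exact ⟨w, hw⟩
        | true =>
          rcases ht with h | ⟨_, hp⟩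
          · exact absurd h (by simp)
          · rw [hm u w true hw] at hbu
            exact absurd hp (fun hp => hBa u v w hbu hp)
    · rcases hM' u v hadj hnE1 with ⟨w, hw, hp⟩ | ⟨w, t, hw, ht⟩
      · rw [hm u w false hw] at hbu
        exact absurd hp (fun hp => hBa u v w hbu hp)
      · cases t with
        | false => exact ⟨w, hw⟩
        | true =>
          rcases ht with h | ⟨_, hp⟩
          · exact absurd h (by simp)
          · rw [hm v w true hw] at hbv
            exact absurd hp (fun hp => hBa v u w hbv hp)
  · intro u v hadj huL hvL
    have hvu : G.adj v u := G.adj_symm u v hadj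
    have huv : u ≠ v := hne u v hadj
    have hnE1 : ¬ M'.hasEdge u v := fun h => huL ⟨v, h⟩
    have hnE2 : ¬ M'.hasEdge v u := fun h => hvL ⟨u, h⟩
    have hbv : G.Better v (M.m v) u := by
      rcases hM' u v hadj hnE1 with ⟨w, hw, _⟩ | ⟨w, t, hw, ht⟩
      · exact absurd ⟨w, hw⟩ huL
      · cases t with
        | false => exact absurd ⟨w, hw⟩ hvL
        | true =>
          rcases ht with h | ⟨_, hp⟩
          · exact absurd h (by simp)
          · have hwv : w ≠ v := fun h => (hne v w (M'.mem_adj v w true hw)).symm h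
            have hwu : w ≠ u := by
              rintro rfl
              exact huL ⟨v, by simpa using M'.consistent v w true hw⟩
            rw [hm v w true hw]
            right
            exact ⟨hwv, huv, hp⟩
    have hbu : G.Better u (M.m u) v := by
      rcases hM' v u hvu hnE2 with ⟨w, hw, _⟩ | ⟨w, t, hw, ht⟩
      · exact absurd ⟨w, hw⟩ hvL
      · cases t with
        | false => exact absurd ⟨w, hw⟩ huL
        | true =>
          rcases ht with h | ⟨_, hp⟩
          · exact absurd h (by simp)
          · have hwu : w ≠ u := fun h => (hne u w (M'.mem_adj u w true hw)).symm h
            have hwv : w ≠ v := by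
              rintro rfl
              exact hvL ⟨u, by simpa using M'.consistent u w true hw⟩
            rw [hm u w true hw]
            right
            exact ⟨hwu, Ne.symm huv, hp⟩
    exact ⟨hadj, hbu, hbv⟩
end

section
/- Let G = (V,E) be a graph with strict preference lists and let G' be the associated bidirected instance. If G admits a strongly dominant matching, then G' admits a stable matching. -/
open scoped Classical

open RoommatesInstance in
/-- If `G` admits a strongly dominant matching, then the bidirected
instance `G'` admits a stable matching. -/
theorem bidirStable_of_stronglyDominant {V : Type} [Fintype V]
    (G : RoommatesInstance V) (hG : G.StrictPrefs)
    (h : ∃ M : G.Matching, G.StronglyDominant M) :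
    ∃ M' : G.BidirMatching, G.BidirStable M' := by
  obtain ⟨M, L, R, hpart, hLR, hRm, hblock, hneg⟩ := h
  -- the sign assigned to a matched vertex: R-vertices get `false`, L-vertices `true`
  set sgn : V → Bool := fun u => if u ∈ R then false else true with hsgn
  have hLiff : ∀ u, u ∈ L ↔ u ∉ R := by
    intro u
    constructor
    · intro hL hR; exact (hpart u).2 ⟨hL, hR⟩
    · intro hR; rcases (hpart u).1 with h | h
      · exact h
      · exact absurd h hR
  -- the matching M' in G'
  refine ⟨⟨fun u => if M.m u = u then none else some (M.m u, sgn u), ?_, ?_⟩, ?_⟩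
  · intro u v s hp
    by_cases hm : M.m u = u
    · simp [hm] at hp
    · replace hp : (if M.m u = u then none else some (M.m u, sgn u)) = some (v, s) := hp
      rw [if_neg hm] at hp
      simp only [Option.some.injEq, Prod.mk.injEq] at hp
      obtain ⟨rfl, rfl⟩ := hp
      exact M.adj_of_ne u hm
  · intro u v s hp
    by_cases hm : M.m u = u
    · simp [hm] at hp
    · replace hp : (if M.m u = u then none else some (M.m u, sgn u)) = some (v, s) := hp
      rw [if_neg hm] at hp
      simp only [Option.some.injEq, Prod.mk.injEq] at hp
      obtain ⟨rfl, rfl⟩ := hp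
      show (if M.m (M.m u) = M.m u then none else some (M.m (M.m u), sgn (M.m u))) = some (u, !(sgn u))
      have hmv : M.m (M.m u) = u := M.invol u
      have hmvne : M.m (M.m u) ≠ M.m u := by
        rw [hmv]; exact fun h => hm h.symm
      have huLmR : u ∈ L ↔ M.m u ∈ R := hLR u hm
      have : sgn (M.m u) = !(sgn u) := by
        simp only [hsgn]
        by_cases hR : u ∈ R
        · have : M.m u ∉ R := fun h => (hLiff u).mp (huLmR.mpr h) hR
          simp [hR, this]
        · have huL : u ∈ L := (hLiff u).mpr hR
          have : M.m u ∈ R := huLmR.mp huL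
          simp [hR, this]
      have hune : ¬ u = M.m u := fun h => hm h.symm
      simp [if_neg hmvne, hmv, this, hune]
  -- stability
  · intro u v hadj hne
    have hvu : G.adj v u := G.adj_symm _ _ hadj
    have huv_ne : u ≠ v := fun h => G.adj_irrefl v (h ▸ hadj)
    have hvu_ne : v ≠ u := fun h => huv_ne h.symm
    simp only [BidirMatching.hasEdge] at hne
    by_cases hvR : v ∈ R
    · -- v is in R: matched on its minus copy
      have hvm : M.m v ≠ v := hRm v hvR
      right
      refine ⟨M.m v, false, ?_, Or.inl rfl⟩
      simp [if_neg hvm, hsgn, hvR]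
    · -- v ∈ L
      have hvL : v ∈ L := (hLiff v).mpr hvR
      -- first: either we are done, or `Better v u (M.m v)`
      have hBv : G.Better v u (M.m v) ∨
          ((∃ w, (if M.m u = u then none else some (M.m u, sgn u)) = some (w, false)
              ∧ G.pref u w v) ∨
           (∃ w t, (if M.m v = v then none else some (M.m v, sgn v)) = some (w, t)
              ∧ (t = false ∨ (t = true ∧ G.pref v w u)))) := by
        by_cases hvm : M.m v = v
        · exact Or.inl (Or.inl ⟨hvm, huv_ne⟩)
        · by_cases hp : G.pref v (M.m v) u
          · refine Or.inr (Or.inr ⟨M.m v, true, ?_, Or.inr ⟨rfl, hp⟩⟩)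
            simp [if_neg hvm, hsgn, hvR]
          · -- u ≠ M.m v, else the edge would be in M'
            have hune : u ≠ M.m v := by
              intro h
              have hmuR : M.m v ∈ R := (hLR v hvm).mp hvL
              have hmu : M.m u = v := h ▸ M.invol v
              have hmune : M.m u ≠ u := by
                rw [hmu]; exact fun hh => huv_ne hh.symm
              apply hne
              simp [if_neg hmune, hmu, hsgn, h ▸ hmuR, hvu_ne]
            have hadjvm : G.adj v (M.m v) := M.adj_of_ne v hvm
            rcases hG.2.2.2 v u (M.m v) hvu hadjvm hune with h | h
            · exact Or.inl (Or.inr ⟨huv_ne, hvm, h⟩)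
            · exact absurd h hp
      rcases hBv with hBv | hdone
      · -- now case on where u is
        by_cases huR : u ∈ R
        · -- u ∈ R: it is matched on its minus copy; show pref u (M.m u) v
          have hum : M.m u ≠ u := hRm u huR
          by_cases hp : G.pref u (M.m u) v
          · left
            refine ⟨M.m u, ?_, hp⟩
            simp [if_neg hum, hsgn, huR]
          · -- v ≠ M.m u
            have hvne : v ≠ M.m u := by
              intro h
              have hmvu : M.m v = u := h ▸ M.invol u
              rcases hBv with ⟨h1, h2⟩ | ⟨h1, h2, h3⟩
              · exact h2 (hmvu ▸ h1)
              · exact hG.2.2.1 v u u (hmvu ▸ h3) (hmvu ▸ h3)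
            have hadjum : G.adj u (M.m u) := M.adj_of_ne u hum
            rcases hG.2.2.2 u v (M.m u) hadj hadjum hvne with h | h
            · -- (u,v) blocks M, so v ∈ R, contradiction
              have hb : G.Blocks M u v :=
                ⟨hadj, Or.inr ⟨hvu_ne, hum, h⟩, hBv⟩
              exact absurd (hblock u v hb).2 hvR
            · exact absurd h hp
        · -- u ∈ L: edge inside L is negative, contradiction with hBv
          have huL : u ∈ L := (hLiff u).mpr huR
          obtain ⟨-, -, hBv'⟩ := hneg u v hadj huL hvL
          exfalso
          rcases hBv with ⟨h1, h2⟩ | ⟨h1, h2, h3⟩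
          · rcases hBv' with ⟨h1', h2'⟩ | ⟨h1', h2', h3'⟩
            · exact h2 h1'
            · exact h1' h1
          · rcases hBv' with ⟨h1', h2'⟩ | ⟨h1', h2', h3'⟩
            · exact h1 h1'
            · exact hG.2.2.1 v u (M.m v) h3 h3'
      · exact hdone
end

section
/- Let H = ([n_H], E_H) be a graph and G the roommates instance constructed from H as described. For every popular matching M in G and every i ∈ [n_H], either (a_i,b_i) ∈ M, or both (a_i,d_i) ∈ M and (b_i,c_i) ∈ M. -/
open scoped Classical

/-! ## The roommates instance `G` constructed from a vertex-cover instance `H` -/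

/-- The vertex set of the roommates instance `G` built from a graph `H` on `Fin n`:
vertices `a_i, b_i, c_i, d_i` for every vertex `i` of `H`, and a vertex
`u^e_i = U i j` for every edge `e = (i,j)` of `H` (so `U i j` is the vertex of the
edge `{i,j}` associated with endpoint `i`; for non-adjacent pairs `(i,j)` the vertex
`U i j` is isolated, hence irrelevant). -/
inductive GV (n : ℕ) where
  | A (i : Fin n) | B (i : Fin n) | C (i : Fin n) | D (i : Fin n) | U (i j : Fin n)
  deriving DecidableEq, Fintype

variable {n : ℕ}

/-- The edges of `G` (listed in one direction each):
`a_i` is adjacent to `b_i, c_i, d_i`; `b_i` is adjacent to `c_i` and to `u^e_i` for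
every edge `e` of `H` incident to `i`; and `u^e_i` is adjacent to `u^e_j` for every
edge `e = (i,j)` of `H`. -/
def grel (H : SimpleGraph (Fin n)) : GV n → GV n → Prop := fun x y =>
  (∃ i, x = GV.A i ∧ (y = GV.B i ∨ y = GV.C i ∨ y = GV.D i)) ∨
  (∃ i, x = GV.B i ∧ y = GV.C i) ∨
  (∃ i j, x = GV.B i ∧ y = GV.U i j ∧ H.Adj i j) ∨
  (∃ i j, x = GV.U i j ∧ y = GV.U j i ∧ H.Adj i j)

/-- Ranks encoding the preference lists of `G` (lower rank = more preferred):
`a_i : b_i ≻ c_i ≻ d_i`;  `b_i : a_i ≻ u^{e_1}_i ≻ ⋯ ≻ u^{e_k}_i ≻ c_i`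
(the `u^e_i`'s ordered by the index of the other endpoint of `e`);
`c_i : a_i ≻ b_i`;  `d_i : a_i`;  `u^e_i : u^e_j ≻ b_i`. -/
def grank : GV n → GV n → ℕ := fun x y =>
  match x, y with
  | GV.A _, GV.B _ => 0
  | GV.A _, GV.C _ => 1
  | GV.A _, GV.D _ => 2
  | GV.B _, GV.A _ => 0
  | GV.B _, GV.U _ k => 1 + k.val
  | GV.B _, GV.C _ => 1 + n
  | GV.C _, GV.A _ => 0
  | GV.C _, GV.B _ => 1
  | GV.D _, GV.A _ => 0
  | GV.U _ _, GV.U _ _ => 0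
  | GV.U _ _, GV.B _ => 1
  | _, _ => 0

/-- The roommates instance `G` constructed from the vertex cover instance `H`. -/
def GofH (H : SimpleGraph (Fin n)) : RoommatesInstance (GV n) where
  adj x y := x ≠ y ∧ (grel H x y ∨ grel H y x)
  adj_symm := fun _ _ h => ⟨h.1.symm, h.2.symm⟩
  adj_irrefl := fun _ h => h.1 rfl
  pref u v w :=
    (u ≠ v ∧ (grel H u v ∨ grel H v u)) ∧ (u ≠ w ∧ (grel H u w ∨ grel H w u)) ∧
      grank u v < grank u w

section Helpers

variable {H : SimpleGraph (Fin n)}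

open RoommatesInstance

lemma gadj_AB (i : Fin n) : (GofH H).adj (GV.A i) (GV.B i) :=
  ⟨by simp, Or.inl (Or.inl ⟨i, rfl, Or.inl rfl⟩)⟩

lemma gadj_AC (i : Fin n) : (GofH H).adj (GV.A i) (GV.C i) :=
  ⟨by simp, Or.inl (Or.inl ⟨i, rfl, Or.inr (Or.inl rfl)⟩)⟩

lemma gadj_AD (i : Fin n) : (GofH H).adj (GV.A i) (GV.D i) :=
  ⟨by simp, Or.inl (Or.inl ⟨i, rfl, Or.inr (Or.inr rfl)⟩)⟩

lemma gadj_BU (i j : Fin n) (h : H.Adj i j) : (GofH H).adj (GV.B i) (GV.U i j) :=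
  ⟨by simp, Or.inl (Or.inr (Or.inr (Or.inl ⟨i, j, rfl, rfl, h⟩)))⟩

lemma gadj_UU (i j : Fin n) (h : H.Adj i j) : (GofH H).adj (GV.U i j) (GV.U j i) :=
  ⟨by simp [h.ne], Or.inl (Or.inr (Or.inr (Or.inr ⟨i, j, rfl, rfl, h⟩)))⟩

lemma nbr_A {i : Fin n} {x : GV n} (h : (GofH H).adj (GV.A i) x) :
    x = GV.B i ∨ x = GV.C i ∨ x = GV.D i := by
  obtain ⟨-, h | h⟩ := h <;> simp only [grel] at h <;> aesop

lemma nbr_B {i : Fin n} {x : GV n} (h : (GofH H).adj (GV.B i) x) :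
    x = GV.A i ∨ x = GV.C i ∨ ∃ j, x = GV.U i j ∧ H.Adj i j := by
  obtain ⟨-, h | h⟩ := h <;> simp only [grel] at h <;> aesop

lemma nbr_C {i : Fin n} {x : GV n} (h : (GofH H).adj (GV.C i) x) :
    x = GV.A i ∨ x = GV.B i := by
  obtain ⟨-, h | h⟩ := h <;> simp only [grel] at h <;> aesop

lemma nbr_D {i : Fin n} {x : GV n} (h : (GofH H).adj (GV.D i) x) :
    x = GV.A i := by
  obtain ⟨-, h | h⟩ := h <;> simp only [grel] at h <;> aesop

lemma nbr_U {i j : Fin n} {x : GV n} (h : (GofH H).adj (GV.U i j) x) :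
    x = GV.U j i ∨ x = GV.B i := by
  obtain ⟨-, h | h⟩ := h <;> simp only [grel] at h <;> aesop

lemma gbetter_of {u v w : GV n} (hv : (GofH H).adj u v) (hw : (GofH H).adj u w)
    (h : grank u v < grank u w) : (GofH H).Better u v w :=
  Or.inr ⟨Ne.symm hv.1, Ne.symm hw.1, hv, hw, h⟩

lemma not_gbetter_self (u w : GV n) : ¬ (GofH H).Better u u w := by
  rintro (⟨-, h⟩ | ⟨h, -⟩) <;> exact h rfl

lemma not_gbetter {u v w : GV n} (h1 : w ≠ u) (h2 : ¬ grank u v < grank u w) :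
    ¬ (GofH H).Better u v w := by
  rintro (⟨h, -⟩ | ⟨-, -, hp⟩)
  · exact h1 h
  · exact h2 hp.2.2

lemma gbetter_irrefl (u v : GV n) : ¬ (GofH H).Better u v v := by
  rintro (⟨h1, h2⟩ | ⟨-, -, hp⟩)
  · exact h2 h1
  · exact lt_irrefl _ hp.2.2

open Finset in
lemma delta_eq_sum {V : Type} [Fintype V] (G : RoommatesInstance V)
    (hirr : ∀ u v, ¬ G.Better u v v) (M M' : G.Matching) (S : Finset V)
    (h : ∀ u, u ∉ S → M.m u = M'.m u) :
    G.delta M M' = ∑ u ∈ S,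
      ((if G.Prefers M M' u then (1 : ℤ) else 0) - (if G.Prefers M' M u then 1 else 0)) := by
  have key : ∀ N N' : G.Matching, (∀ u, u ∉ S → N.m u = N'.m u) →
      (G.phi N N' : ℤ) = ∑ u ∈ S, (if G.Prefers N N' u then (1 : ℤ) else 0) := by
    intro N N' hNN'
    unfold RoommatesInstance.phi
    rw [Finset.card_filter]
    push_cast
    rw [← Finset.sum_subset (Finset.subset_univ S)]
    intro x _ hx
    rw [if_neg]
    intro hp
    unfold RoommatesInstance.Prefers at hp
    rw [hNN' x hx] at hp
    exact hirr _ _ hp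
  unfold RoommatesInstance.delta
  rw [key M M' h, key M' M fun u hu => (h u hu).symm, ← Finset.sum_sub_distrib]

end Helpers

open RoommatesInstance in
/-- For every popular matching `M` in `G` and every vertex `i` of
`H`: either `(a_i,b_i) ∈ M`, or both `(a_i,d_i) ∈ M` and `(b_i,c_i) ∈ M`. -/
theorem popular_structure_on_gadget {n : ℕ} (H : SimpleGraph (Fin n))
    (M : (GofH H).Matching) (hM : (GofH H).Popular M) (i : Fin n) :
    M.m (GV.A i) = GV.B i ∨ (M.m (GV.A i) = GV.D i ∧ M.m (GV.B i) = GV.C i) := by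
  classical
  have minv : ∀ v x : GV n, M.m v = x → v = M.m x := fun v x h => by rw [← h, M.invol]
  rcases eq_or_ne (M.m (GV.A i)) (GV.A i) with ha | hane
  · -- `a_i` unmatched: impossible
    exfalso
    have hd : M.m (GV.D i) = GV.D i := by
      by_contra h
      have h2 := minv _ _ (nbr_D (M.adj_of_ne _ h))
      rw [ha] at h2
      exact absurd h2 (by simp)
    have hout : ∀ v, v ≠ GV.A i → v ≠ GV.D i → M.m v ≠ GV.A i ∧ M.m v ≠ GV.D i := by
      intro v h1 h2
      refine ⟨fun h => h1 ?_, fun h => h2 ?_⟩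
      · rw [minv _ _ h, ha]
      · rw [minv _ _ h, hd]
    set f : GV n → GV n := fun v =>
      if v = GV.A i then GV.D i else if v = GV.D i then GV.A i else M.m v with hf
    have hinv : ∀ v, f (f v) = v := by
      intro v
      by_cases h1 : v = GV.A i
      · subst h1; simp [hf]
      by_cases h2 : v = GV.D i
      · subst h2; simp [hf]
      · obtain ⟨k1, k2⟩ := hout v h1 h2
        simp [hf, h1, h2, k1, k2, M.invol]
    have hadjf : ∀ v, f v ≠ v → (GofH H).adj v (f v) := by
      intro v hv
      by_cases h1 : v = GV.A i
      · subst h1; simpa [hf] using gadj_AD (H := H) i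
      by_cases h2 : v = GV.D i
      · subst h2; simpa [hf] using (GofH H).adj_symm _ _ (gadj_AD i)
      · have he : f v = M.m v := by simp [hf, h1, h2]
        rw [he] at hv ⊢
        exact M.adj_of_ne v hv
    set M₁ : (GofH H).Matching := ⟨f, hinv, hadjf⟩ with hM₁
    have hchg : ∀ u, u ∉ ({GV.A i, GV.D i} : Finset (GV n)) → M.m u = M₁.m u := by
      intro v hv
      simp only [Finset.mem_insert, Finset.mem_singleton, not_or] at hv
      rw [hM₁]
      simp [hf, hv.1, hv.2]
    have hdelta := delta_eq_sum (GofH H) (fun u v => gbetter_irrefl u v) M M₁ _ hchg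
    have e1 : M₁.m (GV.A i) = GV.D i := by rw [hM₁]; simp [hf]
    have e2 : M₁.m (GV.D i) = GV.A i := by rw [hM₁]; simp [hf]
    rw [show ({GV.A i, GV.D i} : Finset (GV n)) = insert (GV.A i) {GV.D i} from rfl,
      Finset.sum_insert (by simp), Finset.sum_singleton] at hdelta
    unfold RoommatesInstance.Prefers at hdelta
    rw [ha, hd, e1, e2] at hdelta
    have pAD : (GofH H).Better (GV.A i) (GV.D i) (GV.A i) := Or.inl ⟨rfl, by simp⟩
    have pDA : (GofH H).Better (GV.D i) (GV.A i) (GV.D i) := Or.inl ⟨rfl, by simp⟩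
    rw [if_neg (not_gbetter_self _ _), if_pos pAD, if_neg (not_gbetter_self _ _),
      if_pos pDA] at hdelta
    have := hM M₁
    omega
  rcases nbr_A (M.adj_of_ne _ hane) with hb | hc | hd
  · exact Or.inl hb
  · -- `M(a_i) = c_i`: impossible
    exfalso
    have hca : M.m (GV.C i) = GV.A i := (minv _ _ hc).symm
    rcases eq_or_ne (M.m (GV.B i)) (GV.B i) with hb | hbne
    · -- 3a: `b_i` unmatched
      have hout : ∀ v, v ≠ GV.A i → v ≠ GV.B i → v ≠ GV.C i →
          M.m v ≠ GV.A i ∧ M.m v ≠ GV.B i ∧ M.m v ≠ GV.C i := by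
        intro v h1 h2 h3
        refine ⟨fun h => h3 ?_, fun h => h2 ?_, fun h => h1 ?_⟩
        · rw [minv _ _ h, hc]
        · rw [minv _ _ h, hb]
        · rw [minv _ _ h, hca]
      set f : GV n → GV n := fun v =>
        if v = GV.A i then GV.B i else if v = GV.B i then GV.A i else
        if v = GV.C i then GV.C i else M.m v with hf
      have hinv : ∀ v, f (f v) = v := by
        intro v
        by_cases h1 : v = GV.A i
        · subst h1; simp [hf]
        by_cases h2 : v = GV.B i
        · subst h2; simp [hf]
        by_cases h3 : v = GV.C i
        · subst h3; simp [hf]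
        · obtain ⟨k1, k2, k3⟩ := hout v h1 h2 h3
          simp [hf, h1, h2, h3, k1, k2, k3, M.invol]
      have hadjf : ∀ v, f v ≠ v → (GofH H).adj v (f v) := by
        intro v hv
        by_cases h1 : v = GV.A i
        · subst h1; simpa [hf] using gadj_AB (H := H) i
        by_cases h2 : v = GV.B i
        · subst h2; simpa [hf] using (GofH H).adj_symm _ _ (gadj_AB i)
        by_cases h3 : v = GV.C i
        · subst h3; simp [hf] at hv
        · have he : f v = M.m v := by simp [hf, h1, h2, h3]
          rw [he] at hv ⊢
          exact M.adj_of_ne v hv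
      set M₃ : (GofH H).Matching := ⟨f, hinv, hadjf⟩ with hM₃
      have hchg : ∀ u, u ∉ ({GV.A i, GV.B i, GV.C i} : Finset (GV n)) → M.m u = M₃.m u := by
        intro v hv
        simp only [Finset.mem_insert, Finset.mem_singleton, not_or] at hv
        rw [hM₃]
        simp [hf, hv.1, hv.2.1, hv.2.2]
      have hdelta := delta_eq_sum (GofH H) (fun u v => gbetter_irrefl u v) M M₃ _ hchg
      have e1 : M₃.m (GV.A i) = GV.B i := by rw [hM₃]; simp [hf]
      have e2 : M₃.m (GV.B i) = GV.A i := by rw [hM₃]; simp [hf]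
      have e3 : M₃.m (GV.C i) = GV.C i := by rw [hM₃]; simp [hf]
      rw [show ({GV.A i, GV.B i, GV.C i} : Finset (GV n)) =
          insert (GV.A i) (insert (GV.B i) {GV.C i}) from rfl,
        Finset.sum_insert (by simp), Finset.sum_insert (by simp),
        Finset.sum_singleton] at hdelta
      unfold RoommatesInstance.Prefers at hdelta
      rw [hc, hb, hca, e1, e2, e3] at hdelta
      have q1 : ¬ (GofH H).Better (GV.A i) (GV.C i) (GV.B i) :=
        not_gbetter (by simp) (by norm_num [grank])
      have p1 : (GofH H).Better (GV.A i) (GV.B i) (GV.C i) :=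
        gbetter_of (gadj_AB i) (gadj_AC i) (by norm_num [grank])
      have p2 : (GofH H).Better (GV.B i) (GV.A i) (GV.B i) := Or.inl ⟨rfl, by simp⟩
      have p3 : (GofH H).Better (GV.C i) (GV.A i) (GV.C i) := Or.inl ⟨rfl, by simp⟩
      rw [if_neg q1, if_pos p1, if_neg (not_gbetter_self _ _), if_pos p2, if_pos p3,
        if_neg (not_gbetter_self _ _)] at hdelta
      have := hM M₃
      omega
    rcases nbr_B (M.adj_of_ne _ hbne) with h1 | h1 | ⟨j, hj, hadj⟩
    · exact absurd ((minv _ _ h1).trans hc) (by simp)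
    · exact absurd ((minv _ _ h1).trans hca) (by simp)
    -- 3b: `M(b_i) = u^e_i` with `e = (i,j)`
    have hub : M.m (GV.U i j) = GV.B i := (minv _ _ hj).symm
    have hne : i ≠ j := hadj.ne
    have hne' : j ≠ i := hadj.ne'
    rcases eq_or_ne (M.m (GV.U j i)) (GV.U j i) with hu' | hu'ne
    · -- 3b-i : `u^e_j` unmatched
      have hout : ∀ v, v ≠ GV.A i → v ≠ GV.B i → v ≠ GV.C i → v ≠ GV.U i j → v ≠ GV.U j i →
          M.m v ≠ GV.A i ∧ M.m v ≠ GV.B i ∧ M.m v ≠ GV.C i ∧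
            M.m v ≠ GV.U i j ∧ M.m v ≠ GV.U j i := by
        intro v h1 h2 h3 h4 h5
        refine ⟨fun h => h3 ?_, fun h => h4 ?_, fun h => h1 ?_, fun h => h2 ?_, fun h => h5 ?_⟩
        · rw [minv _ _ h, hc]
        · rw [minv _ _ h, hj]
        · rw [minv _ _ h, hca]
        · rw [minv _ _ h, hub]
        · rw [minv _ _ h, hu']
      set f : GV n → GV n := fun v =>
        if v = GV.A i then GV.B i else if v = GV.B i then GV.A i else
        if v = GV.C i then GV.C i else if v = GV.U i j then GV.U j i else
        if v = GV.U j i then GV.U i j else M.m v with hf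
      have hinv : ∀ v, f (f v) = v := by
        intro v
        by_cases h1 : v = GV.A i
        · subst h1; simp [hf]
        by_cases h2 : v = GV.B i
        · subst h2; simp [hf]
        by_cases h3 : v = GV.C i
        · subst h3; simp [hf]
        by_cases h4 : v = GV.U i j
        · subst h4; simp [hf, hne, hne']
        by_cases h5 : v = GV.U j i
        · subst h5; simp [hf, hne, hne']
        · obtain ⟨k1, k2, k3, k4, k5⟩ := hout v h1 h2 h3 h4 h5
          simp [hf, h1, h2, h3, h4, h5, k1, k2, k3, k4, k5, M.invol]
      have hadjf : ∀ v, f v ≠ v → (GofH H).adj v (f v) := by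
        intro v hv
        by_cases h1 : v = GV.A i
        · subst h1; simpa [hf] using gadj_AB (H := H) i
        by_cases h2 : v = GV.B i
        · subst h2; simpa [hf] using (GofH H).adj_symm _ _ (gadj_AB i)
        by_cases h3 : v = GV.C i
        · subst h3; simp [hf] at hv
        by_cases h4 : v = GV.U i j
        · subst h4; simpa [hf, hne, hne'] using gadj_UU i j hadj
        by_cases h5 : v = GV.U j i
        · subst h5; simpa [hf, hne, hne'] using (GofH H).adj_symm _ _ (gadj_UU i j hadj)
        · have he : f v = M.m v := by simp [hf, h1, h2, h3, h4, h5]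
          rw [he] at hv ⊢
          exact M.adj_of_ne v hv
      set M₄ : (GofH H).Matching := ⟨f, hinv, hadjf⟩ with hM₄
      have hchg : ∀ u, u ∉ ({GV.A i, GV.B i, GV.C i, GV.U i j, GV.U j i} : Finset (GV n)) →
          M.m u = M₄.m u := by
        intro v hv
        simp only [Finset.mem_insert, Finset.mem_singleton, not_or] at hv
        rw [hM₄]
        simp [hf, hv.1, hv.2.1, hv.2.2.1, hv.2.2.2.1, hv.2.2.2.2]
      have hdelta := delta_eq_sum (GofH H) (fun u v => gbetter_irrefl u v) M M₄ _ hchg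
      have e1 : M₄.m (GV.A i) = GV.B i := by rw [hM₄]; simp [hf]
      have e2 : M₄.m (GV.B i) = GV.A i := by rw [hM₄]; simp [hf]
      have e3 : M₄.m (GV.C i) = GV.C i := by rw [hM₄]; simp [hf]
      have e4 : M₄.m (GV.U i j) = GV.U j i := by rw [hM₄]; simp [hf, hne, hne']
      have e5 : M₄.m (GV.U j i) = GV.U i j := by rw [hM₄]; simp [hf, hne, hne']
      rw [show ({GV.A i, GV.B i, GV.C i, GV.U i j, GV.U j i} : Finset (GV n)) =
          insert (GV.A i) (insert (GV.B i) (insert (GV.C i) (insert (GV.U i j) {GV.U j i})))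
          from rfl,
        Finset.sum_insert (by simp), Finset.sum_insert (by simp),
        Finset.sum_insert (by simp), Finset.sum_insert (by simp [hne]),
        Finset.sum_singleton] at hdelta
      unfold RoommatesInstance.Prefers at hdelta
      rw [hc, hj, hca, hub, hu', e1, e2, e3, e4, e5] at hdelta
      have q1 : ¬ (GofH H).Better (GV.A i) (GV.C i) (GV.B i) :=
        not_gbetter (by simp) (by norm_num [grank])
      have p1 : (GofH H).Better (GV.A i) (GV.B i) (GV.C i) :=
        gbetter_of (gadj_AB i) (gadj_AC i) (by norm_num [grank])
      have q2 : ¬ (GofH H).Better (GV.B i) (GV.U i j) (GV.A i) :=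
        not_gbetter (by simp) (by norm_num [grank])
      have p2 : (GofH H).Better (GV.B i) (GV.A i) (GV.U i j) :=
        gbetter_of ((GofH H).adj_symm _ _ (gadj_AB i)) (gadj_BU i j hadj)
          (by norm_num [grank])
      have p3 : (GofH H).Better (GV.C i) (GV.A i) (GV.C i) := Or.inl ⟨rfl, by simp⟩
      have q4 : ¬ (GofH H).Better (GV.U i j) (GV.B i) (GV.U j i) :=
        not_gbetter (by simp [hne']) (by norm_num [grank])
      have p4 : (GofH H).Better (GV.U i j) (GV.U j i) (GV.B i) :=
        gbetter_of (gadj_UU i j hadj) ((GofH H).adj_symm _ _ (gadj_BU i j hadj))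
          (by norm_num [grank])
      have p5 : (GofH H).Better (GV.U j i) (GV.U i j) (GV.U j i) :=
        Or.inl ⟨rfl, by simp [hne]⟩
      rw [if_neg q1, if_pos p1, if_neg q2, if_pos p2, if_pos p3,
        if_neg (not_gbetter_self _ _), if_neg q4, if_pos p4,
        if_neg (not_gbetter_self _ _), if_pos p5] at hdelta
      have := hM M₄
      omega
    rcases nbr_U (M.adj_of_ne _ hu'ne) with h1 | h1
    · exact absurd ((minv _ _ h1).trans hub) (by simp)
    -- 3b-ii : `M(u^e_j) = b_j`
    have hbj : M.m (GV.B j) = GV.U j i := (minv _ _ h1).symm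
    have hout : ∀ v, v ≠ GV.A i → v ≠ GV.B i → v ≠ GV.C i → v ≠ GV.U i j → v ≠ GV.U j i →
        v ≠ GV.B j →
        M.m v ≠ GV.A i ∧ M.m v ≠ GV.B i ∧ M.m v ≠ GV.C i ∧
          M.m v ≠ GV.U i j ∧ M.m v ≠ GV.U j i ∧ M.m v ≠ GV.B j := by
      intro v h1' h2 h3 h4 h5 h6
      refine ⟨fun h => h3 ?_, fun h => h4 ?_, fun h => h1' ?_, fun h => h2 ?_,
        fun h => h6 ?_, fun h => h5 ?_⟩
      · rw [minv _ _ h, hc]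
      · rw [minv _ _ h, hj]
      · rw [minv _ _ h, hca]
      · rw [minv _ _ h, hub]
      · rw [minv _ _ h, h1]
      · rw [minv _ _ h, hbj]
    set f : GV n → GV n := fun v =>
      if v = GV.A i then GV.B i else if v = GV.B i then GV.A i else
      if v = GV.C i then GV.C i else if v = GV.U i j then GV.U j i else
      if v = GV.U j i then GV.U i j else if v = GV.B j then GV.B j else M.m v with hf
    have hinv : ∀ v, f (f v) = v := by
      intro v
      by_cases h1' : v = GV.A i
      · subst h1'; simp [hf]
      by_cases h2 : v = GV.B i
      · subst h2; simp [hf]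
      by_cases h3 : v = GV.C i
      · subst h3; simp [hf]
      by_cases h4 : v = GV.U i j
      · subst h4; simp [hf, hne, hne']
      by_cases h5 : v = GV.U j i
      · subst h5; simp [hf, hne, hne']
      by_cases h6 : v = GV.B j
      · subst h6; simp [hf, hne, hne']
      · obtain ⟨k1, k2, k3, k4, k5, k6⟩ := hout v h1' h2 h3 h4 h5 h6
        simp [hf, h1', h2, h3, h4, h5, h6, k1, k2, k3, k4, k5, k6, M.invol]
    have hadjf : ∀ v, f v ≠ v → (GofH H).adj v (f v) := by
      intro v hv
      by_cases h1' : v = GV.A i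
      · subst h1'; simpa [hf] using gadj_AB (H := H) i
      by_cases h2 : v = GV.B i
      · subst h2; simpa [hf] using (GofH H).adj_symm _ _ (gadj_AB i)
      by_cases h3 : v = GV.C i
      · subst h3; simp [hf] at hv
      by_cases h4 : v = GV.U i j
      · subst h4; simpa [hf, hne, hne'] using gadj_UU i j hadj
      by_cases h5 : v = GV.U j i
      · subst h5; simpa [hf, hne, hne'] using (GofH H).adj_symm _ _ (gadj_UU i j hadj)
      by_cases h6 : v = GV.B j
      · subst h6; simp [hf, hne, hne'] at hv
      · have he : f v = M.m v := by simp [hf, h1', h2, h3, h4, h5, h6]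
        rw [he] at hv ⊢
        exact M.adj_of_ne v hv
    set M₅ : (GofH H).Matching := ⟨f, hinv, hadjf⟩ with hM₅
    have hchg : ∀ u,
        u ∉ ({GV.A i, GV.B i, GV.C i, GV.U i j, GV.U j i, GV.B j} : Finset (GV n)) →
        M.m u = M₅.m u := by
      intro v hv
      simp only [Finset.mem_insert, Finset.mem_singleton, not_or] at hv
      rw [hM₅]
      simp [hf, hv.1, hv.2.1, hv.2.2.1, hv.2.2.2.1, hv.2.2.2.2.1, hv.2.2.2.2.2]
    have hdelta := delta_eq_sum (GofH H) (fun u v => gbetter_irrefl u v) M M₅ _ hchg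
    have e1 : M₅.m (GV.A i) = GV.B i := by rw [hM₅]; simp [hf]
    have e2 : M₅.m (GV.B i) = GV.A i := by rw [hM₅]; simp [hf]
    have e3 : M₅.m (GV.C i) = GV.C i := by rw [hM₅]; simp [hf]
    have e4 : M₅.m (GV.U i j) = GV.U j i := by rw [hM₅]; simp [hf, hne, hne']
    have e5 : M₅.m (GV.U j i) = GV.U i j := by rw [hM₅]; simp [hf, hne, hne']
    have e6 : M₅.m (GV.B j) = GV.B j := by rw [hM₅]; simp [hf, hne, hne']
    rw [show ({GV.A i, GV.B i, GV.C i, GV.U i j, GV.U j i, GV.B j} : Finset (GV n)) =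
        insert (GV.A i) (insert (GV.B i) (insert (GV.C i)
          (insert (GV.U i j) (insert (GV.U j i) {GV.B j})))) from rfl,
      Finset.sum_insert (by simp), Finset.sum_insert (by simp [hne]),
      Finset.sum_insert (by simp), Finset.sum_insert (by simp [hne]),
      Finset.sum_insert (by simp), Finset.sum_singleton] at hdelta
    unfold RoommatesInstance.Prefers at hdelta
    rw [hc, hj, hca, hub, h1, hbj, e1, e2, e3, e4, e5, e6] at hdelta
    have q1 : ¬ (GofH H).Better (GV.A i) (GV.C i) (GV.B i) :=
      not_gbetter (by simp) (by norm_num [grank])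
    have p1 : (GofH H).Better (GV.A i) (GV.B i) (GV.C i) :=
      gbetter_of (gadj_AB i) (gadj_AC i) (by norm_num [grank])
    have q2 : ¬ (GofH H).Better (GV.B i) (GV.U i j) (GV.A i) :=
      not_gbetter (by simp) (by norm_num [grank])
    have p2 : (GofH H).Better (GV.B i) (GV.A i) (GV.U i j) :=
      gbetter_of ((GofH H).adj_symm _ _ (gadj_AB i)) (gadj_BU i j hadj)
        (by norm_num [grank])
    have p3 : (GofH H).Better (GV.C i) (GV.A i) (GV.C i) := Or.inl ⟨rfl, by simp⟩
    have q4 : ¬ (GofH H).Better (GV.U i j) (GV.B i) (GV.U j i) :=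
      not_gbetter (by simp [hne']) (by norm_num [grank])
    have p4 : (GofH H).Better (GV.U i j) (GV.U j i) (GV.B i) :=
      gbetter_of (gadj_UU i j hadj) ((GofH H).adj_symm _ _ (gadj_BU i j hadj))
        (by norm_num [grank])
    have q5 : ¬ (GofH H).Better (GV.U j i) (GV.B j) (GV.U i j) :=
      not_gbetter (by simp [hne]) (by norm_num [grank])
    have p5 : (GofH H).Better (GV.U j i) (GV.U i j) (GV.B j) :=
      gbetter_of (gadj_UU j i hadj.symm) ((GofH H).adj_symm _ _ (gadj_BU j i hadj.symm))
        (by norm_num [grank])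
    have p6 : (GofH H).Better (GV.B j) (GV.U j i) (GV.B j) := Or.inl ⟨rfl, by simp⟩
    rw [if_neg q1, if_pos p1, if_neg q2, if_pos p2, if_pos p3,
      if_neg (not_gbetter_self _ _), if_neg q4, if_pos p4, if_neg q5, if_pos p5,
      if_pos p6, if_neg (not_gbetter_self _ _)] at hdelta
    have := hM M₅
    omega
  · -- `M(a_i) = d_i`: then `M(b_i) = c_i`
    refine Or.inr ⟨hd, ?_⟩
    by_contra hbc
    have hda : M.m (GV.D i) = GV.A i := (minv _ _ hd).symm
    have hcc : M.m (GV.C i) = GV.C i := by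
      by_contra h
      rcases nbr_C (M.adj_of_ne _ h) with h1 | h1
      · have h2 := minv _ _ h1
        rw [hd] at h2
        exact absurd h2 (by simp)
      · exact hbc (minv _ _ h1).symm
    have hout : ∀ v, v ≠ GV.A i → v ≠ GV.C i → v ≠ GV.D i →
        M.m v ≠ GV.A i ∧ M.m v ≠ GV.C i ∧ M.m v ≠ GV.D i := by
      intro v h1 h2 h3
      refine ⟨fun h => h3 ?_, fun h => h2 ?_, fun h => h1 ?_⟩
      · rw [minv _ _ h, hd]
      · rw [minv _ _ h, hcc]
      · rw [minv _ _ h, hda]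
    set f : GV n → GV n := fun v =>
      if v = GV.A i then GV.C i else if v = GV.C i then GV.A i else
      if v = GV.D i then GV.D i else M.m v with hf
    have hinv : ∀ v, f (f v) = v := by
      intro v
      by_cases h1 : v = GV.A i
      · subst h1; simp [hf]
      by_cases h2 : v = GV.C i
      · subst h2; simp [hf]
      by_cases h3 : v = GV.D i
      · subst h3; simp [hf]
      · obtain ⟨k1, k2, k3⟩ := hout v h1 h2 h3
        simp [hf, h1, h2, h3, k1, k2, k3, M.invol]
    have hadjf : ∀ v, f v ≠ v → (GofH H).adj v (f v) := by
      intro v hv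
      by_cases h1 : v = GV.A i
      · subst h1; simpa [hf] using gadj_AC (H := H) i
      by_cases h2 : v = GV.C i
      · subst h2; simpa [hf] using (GofH H).adj_symm _ _ (gadj_AC i)
      by_cases h3 : v = GV.D i
      · subst h3; simp [hf] at hv
      · have he : f v = M.m v := by simp [hf, h1, h2, h3]
        rw [he] at hv ⊢
        exact M.adj_of_ne v hv
    set M₂ : (GofH H).Matching := ⟨f, hinv, hadjf⟩ with hM₂
    have hchg : ∀ u, u ∉ ({GV.A i, GV.C i, GV.D i} : Finset (GV n)) → M.m u = M₂.m u := by
      intro v hv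
      simp only [Finset.mem_insert, Finset.mem_singleton, not_or] at hv
      rw [hM₂]
      simp [hf, hv.1, hv.2.1, hv.2.2]
    have hdelta := delta_eq_sum (GofH H) (fun u v => gbetter_irrefl u v) M M₂ _ hchg
    have e1 : M₂.m (GV.A i) = GV.C i := by rw [hM₂]; simp [hf]
    have e2 : M₂.m (GV.C i) = GV.A i := by rw [hM₂]; simp [hf]
    have e3 : M₂.m (GV.D i) = GV.D i := by rw [hM₂]; simp [hf]
    rw [show ({GV.A i, GV.C i, GV.D i} : Finset (GV n)) =
        insert (GV.A i) (insert (GV.C i) {GV.D i}) from rfl,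
      Finset.sum_insert (by simp), Finset.sum_insert (by simp),
      Finset.sum_singleton] at hdelta
    unfold RoommatesInstance.Prefers at hdelta
    rw [hd, hcc, hda, e1, e2, e3] at hdelta
    have q1 : ¬ (GofH H).Better (GV.A i) (GV.D i) (GV.C i) :=
      not_gbetter (by simp) (by norm_num [grank])
    have p1 : (GofH H).Better (GV.A i) (GV.C i) (GV.D i) :=
      gbetter_of (gadj_AC i) (gadj_AD i) (by norm_num [grank])
    have p2 : (GofH H).Better (GV.C i) (GV.A i) (GV.C i) := Or.inl ⟨rfl, by simp⟩
    have p3 : (GofH H).Better (GV.D i) (GV.A i) (GV.D i) := Or.inl ⟨rfl, by simp⟩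
    rw [if_neg q1, if_pos p1, if_neg (not_gbetter_self _ _), if_pos p2, if_pos p3,
      if_neg (not_gbetter_self _ _)] at hdelta
    have := hM M₂
    omega
end
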